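/- Let n ≥ 1, N ≥ 1, ε > 0 and Δ ≥ 0. For b : Fin N → ℝ^n, let μ_b be the product measure on (ℝ^n)^N whose i-th factor is the n-dimensional Laplacian measure centered at b_i (density v ↦ c_n^ε·exp(−ε‖v − b_i‖) with respect to Lebesgue measure on ℝ^n). Then the μ_b-measure of the set {(v_1,…,v_N) ∈ (ℝ^n)^N : min over permutations τ of {1,…,N} of Σ_{i=1}^{N} ‖b_i − v_{τ(i)}‖ ≤ N·Δ} is at least 1 − exp(−ε·N·Δ) · e_{n−1}(ε·N·Δ) · Σ_{k=0}^{N−1} ((ε·N·Δ)^n/n!)^k. (Since min_τ Σ_i ‖b_i − v_{τ(i)}‖ = N·E_{‖·‖}(b, v) for size-N bags, this lower-bounds the probability that Algorithm 1 outputs a bag within Earth Mover's distance Δ of the input bag b.) -/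

import Mathlib

open MeasureTheory Real Finset

/-- The normalising constant of the `n`-dimensional Laplacian density with parameter `ε`. -/
noncomputable def lapConst (n : ℕ) (ε : ℝ) : ℝ :=
  ε ^ n * Real.Gamma ((n : ℝ) / 2 + 1) / (Real.Gamma n * n * Real.pi ^ ((n : ℝ) / 2))

/-- The `n`-dimensional Laplacian measure with parameter `ε` centered at `x ∈ ℝ^n`. -/
noncomputable def lapMeasure (n : ℕ) (ε : ℝ) (x : EuclideanSpace ℝ (Fin n)) :
    Measure (EuclideanSpace ℝ (Fin n)) :=
  volume.withDensity fun v => ENNReal.ofReal (lapConst n ε * Real.exp (-ε * ‖v - x‖))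

open Set Metric
open scoped ENNReal NNReal

/-- partial exponential sum times decaying exponential -/
noncomputable def tailR (ε : ℝ) (n : ℕ) (R : ℝ) : ℝ :=
  Real.exp (-(ε*R)) * ∑ j ∈ Finset.range n, (ε*R)^j / (Nat.factorial j)

lemma hasDerivAt_tailR (ε : ℝ) (n : ℕ) (hn : 1 ≤ n) (s : ℝ) :
    HasDerivAt (fun s => tailR ε n s)
      (-(ε * ((ε*s)^(n-1) / (Nat.factorial (n-1))) * Real.exp (-(ε*s)))) s := by
  obtain ⟨m, rfl⟩ : ∃ m, n = m + 1 := ⟨n - 1, (Nat.succ_pred_eq_of_pos hn).symm⟩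
  have he : HasDerivAt (fun s : ℝ => Real.exp (-(ε*s))) (-ε * Real.exp (-(ε*s))) s := by
    have : HasDerivAt (fun s : ℝ => -(ε*s)) (-ε) s := by
      simpa using ((hasDerivAt_id s).const_mul ε).fun_neg
    simpa [mul_comm, Function.comp_def] using (Real.hasDerivAt_exp (-(ε*s))).comp s this
  have hP : HasDerivAt (fun s : ℝ => ∑ j ∈ Finset.range (m+1), (ε*s)^j / (Nat.factorial j))
      (ε * ∑ j ∈ Finset.range m, (ε*s)^j / (Nat.factorial j)) s := by
    have hterm : ∀ j : ℕ, HasDerivAt (fun s : ℝ => (ε*s)^j / (Nat.factorial j))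
        (ε * (j * (ε*s)^(j-1)) / (Nat.factorial j)) s := by
      intro j
      have h1 : HasDerivAt (fun s : ℝ => ε*s) ε s := by
        simpa using (hasDerivAt_id s).const_mul ε
      have := ((hasDerivAt_pow j (ε*s)).comp s h1)
      simpa [mul_comm, mul_assoc, mul_left_comm] using this.div_const (Nat.factorial j)
    have h2 := HasDerivAt.fun_sum (fun j (_ : j ∈ Finset.range (m+1)) => hterm j)
    refine h2.congr_deriv (Eq.symm ?_)
    rw [Finset.sum_range_succ' _ m, Finset.mul_sum]
    simp only [Nat.cast_zero, zero_mul, pow_zero, mul_zero, Nat.factorial_zero, zero_div,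
      add_zero, Nat.cast_succ]
    refine Finset.sum_congr rfl fun j _ => ?_
    rw [Nat.factorial_succ]
    have : (Nat.factorial j : ℝ) ≠ 0 := Nat.cast_ne_zero.2 (Nat.factorial_ne_zero j)
    push_cast
    field_simp
  have := he.fun_mul hP
  unfold tailR
  refine this.congr_deriv (Eq.symm ?_)
  rw [Finset.sum_range_succ]
  have : (Nat.factorial m : ℝ) ≠ 0 := Nat.cast_ne_zero.2 (Nat.factorial_ne_zero m)
  simp only [Nat.add_sub_cancel]
  ring

lemma tendsto_tailR (ε : ℝ) (hε : 0 < ε) (n : ℕ) :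
    Filter.Tendsto (fun s => tailR ε n s) Filter.atTop (nhds 0) := by
  unfold tailR
  rw [show (0:ℝ) = ∑ j ∈ Finset.range n, 0 by simp]
  simp_rw [Finset.mul_sum]
  refine tendsto_finset_sum _ fun j _ => ?_
  have h1 : Filter.Tendsto (fun s : ℝ => ε * s) Filter.atTop Filter.atTop :=
    Filter.Tendsto.const_mul_atTop hε Filter.tendsto_id
  have h2 := (Real.tendsto_pow_mul_exp_neg_atTop_nhds_zero j).comp h1
  have := h2.div_const (Nat.factorial j : ℝ)
  simp only [Function.comp, zero_div] at this
  exact this.congr fun s => by ring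

lemma integrableOn_tail (ε : ℝ) (hε : 0 < ε) (n : ℕ) (hn : 1 ≤ n) (R : ℝ) (hR : 0 ≤ R) :
    IntegrableOn (fun s => s^(n-1) * Real.exp (-(ε*s))) (Ioi R) := by
  have hderiv : ∀ s ∈ Ici R, HasDerivAt (fun s => -((Nat.factorial (n-1) : ℝ)/ε^n * tailR ε n s))
      (s^(n-1) * Real.exp (-(ε*s))) s := by
    intro s _
    have := ((hasDerivAt_tailR ε n hn s).const_mul ((Nat.factorial (n-1) : ℝ)/ε^n)).fun_neg
    refine this.congr_deriv (Eq.symm ?_)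
    have h1 : (Nat.factorial (n-1) : ℝ) ≠ 0 := Nat.cast_ne_zero.2 (Nat.factorial_ne_zero _)
    have h2 : ε ≠ 0 := hε.ne'
    rw [mul_neg, neg_neg, mul_pow,
      show ε^n = ε * ε^(n-1) from by rw [← pow_succ']; congr 1; omega]
    field_simp
  have hpos : ∀ s ∈ Ioi R, 0 ≤ s^(n-1) * Real.exp (-(ε*s)) := fun s hs =>
    mul_nonneg (pow_nonneg (hR.trans (le_of_lt hs)) _) (Real.exp_pos _).le
  have htend : Filter.Tendsto (fun s => -((Nat.factorial (n-1) : ℝ)/ε^n * tailR ε n s))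
      Filter.atTop (nhds 0) := by
    simpa using ((tendsto_tailR ε hε n).const_mul ((Nat.factorial (n-1) : ℝ)/ε^n)).neg
  exact integrableOn_Ioi_deriv_of_nonneg' hderiv hpos htend

lemma integral_tail (ε : ℝ) (hε : 0 < ε) (n : ℕ) (hn : 1 ≤ n) (R : ℝ) (hR : 0 ≤ R) :
    ∫ s in Ioi R, s^(n-1) * Real.exp (-(ε*s)) =
      (Nat.factorial (n-1) : ℝ)/ε^n * tailR ε n R := by
  have hderiv : ∀ s ∈ Ici R, HasDerivAt (fun s => -((Nat.factorial (n-1) : ℝ)/ε^n * tailR ε n s))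
      (s^(n-1) * Real.exp (-(ε*s))) s := by
    intro s _
    have := ((hasDerivAt_tailR ε n hn s).const_mul ((Nat.factorial (n-1) : ℝ)/ε^n)).fun_neg
    refine this.congr_deriv (Eq.symm ?_)
    have h1 : (Nat.factorial (n-1) : ℝ) ≠ 0 := Nat.cast_ne_zero.2 (Nat.factorial_ne_zero _)
    have h2 : ε ≠ 0 := hε.ne'
    rw [mul_neg, neg_neg, mul_pow,
      show ε^n = ε * ε^(n-1) from by rw [← pow_succ']; congr 1; omega]
    field_simp
  have hpos : ∀ s ∈ Ioi R, 0 ≤ s^(n-1) * Real.exp (-(ε*s)) := fun s hs =>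
    mul_nonneg (pow_nonneg (hR.trans (le_of_lt hs)) _) (Real.exp_pos _).le
  have htend : Filter.Tendsto (fun s => -((Nat.factorial (n-1) : ℝ)/ε^n * tailR ε n s))
      Filter.atTop (nhds 0) := by
    simpa using ((tendsto_tailR ε hε n).const_mul ((Nat.factorial (n-1) : ℝ)/ε^n)).neg
  have := integral_Ioi_of_hasDerivAt_of_nonneg' hderiv hpos htend
  rw [this]
  ring

lemma beta_nat (t : ℝ) (ht : 0 ≤ t) : ∀ (b a : ℕ),
    ∫ s in (0:ℝ)..t, s^a * (t-s)^b =
      t^(a+b+1) * (Nat.factorial a * Nat.factorial b) / (Nat.factorial (a+b+1)) := by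
  intro b
  induction b with
  | zero =>
    intro a
    simp only [pow_zero, mul_one, integral_pow, Nat.factorial_one, Nat.factorial_succ,
      Nat.add_zero, Nat.cast_one]
    push_cast
    field_simp
    ring
  | succ b ih =>
    intro a
    have hu : ∀ x ∈ Set.uIcc (0:ℝ) t, HasDerivAt (fun s : ℝ => (t-s)^(b+1))
        (-((b+1) * (t-x)^b)) x := by
      intro x _
      have h1 : HasDerivAt (fun s : ℝ => t - s) (-1) x := (hasDerivAt_id x).const_sub t
      have := (hasDerivAt_pow (b+1) (t-x)).comp x h1
      refine this.congr_deriv (Eq.symm ?_)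
      push_cast
      ring
    have hv : ∀ x ∈ Set.uIcc (0:ℝ) t, HasDerivAt (fun s : ℝ => s^(a+1)/(a+1))
        (x^a) x := by
      intro x _
      have := (hasDerivAt_pow (a+1) x).div_const ((a:ℝ)+1)
      refine this.congr_deriv (Eq.symm ?_)
      have : ((a:ℝ)+1) ≠ 0 := by positivity
      push_cast
      field_simp
    have hiu : IntervalIntegrable (fun x : ℝ => -((b+1) * (t-x)^b)) volume 0 t :=
      (Continuous.intervalIntegrable (by continuity) _ _)
    have hiv : IntervalIntegrable (fun x : ℝ => x^a) volume 0 t :=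
      (Continuous.intervalIntegrable (by continuity) _ _)
    have parts := intervalIntegral.integral_mul_deriv_eq_deriv_mul hu hv hiu hiv
    have comm : ∫ s in (0:ℝ)..t, s^a * (t-s)^(b+1) =
        ∫ s in (0:ℝ)..t, (t-s)^(b+1) * s^a := by
      apply intervalIntegral.integral_congr
      intro x _
      ring
    have comm2 : ∫ s in (0:ℝ)..t, -((b+1) * (t-s)^b) * (s^(a+1)/(a+1)) =
        -((b+1)/(a+1)) * ∫ s in (0:ℝ)..t, s^(a+1) * (t-s)^b := by
      rw [← intervalIntegral.integral_const_mul]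
      apply intervalIntegral.integral_congr
      intro x _
      field_simp
    rw [comm, parts, comm2, ih (a+1)]
    simp only [sub_self, zero_pow (Nat.succ_ne_zero b), zero_mul, sub_zero, zero_pow
      (Nat.succ_ne_zero a), zero_div, mul_zero]
    have h1 : ((a:ℝ)+1) ≠ 0 := by positivity
    have h2 : (Nat.factorial (a+1+b+1) : ℝ) ≠ 0 := Nat.cast_ne_zero.2 (Nat.factorial_ne_zero _)
    have e1 : a+1+b+1 = a+(b+1)+1 := by omega
    rw [e1]
    rw [Nat.factorial_succ (a), Nat.factorial_succ b]
    push_cast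
    field_simp
    ring

lemma sum_range_add' (f : ℕ → ℝ) (m n : ℕ) :
    ∑ j ∈ Finset.range (m+n), f j = (∑ j ∈ Finset.range m, f j) + ∑ j ∈ Finset.range n, f (m+j) := by
  induction n with
  | zero => simp
  | succ k ih =>
    rw [show m + (k+1) = (m+k)+1 from rfl, Finset.sum_range_succ, ih, Finset.sum_range_succ,
      add_assoc]

lemma conv_scalar (ε : ℝ) (hε : 0 < ε) (n : ℕ) (hn : 1 ≤ n) (M : ℕ) (t : ℝ) (ht : 0 ≤ t) :
    ∫ r in (0:ℝ)..t, (ε^n/(Nat.factorial (n-1))) * (r^(n-1) * Real.exp (-(ε*r)))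
        * tailR ε M (t-r) =
      Real.exp (-(ε*t)) * ∑ j ∈ Finset.range M, (ε*t)^(n+j) / (Nat.factorial (n+j)) := by
  have hrw : ∀ r : ℝ, (ε^n/(Nat.factorial (n-1))) * (r^(n-1) * Real.exp (-(ε*r)))
      * tailR ε M (t-r) =
      ∑ j ∈ Finset.range M,
        (ε^n/(Nat.factorial (n-1)) * Real.exp (-(ε*t)) * (ε^j / (Nat.factorial j)))
          * (r^(n-1) * (t-r)^j) := by
    intro r
    unfold tailR
    rw [← mul_assoc, Finset.mul_sum]
    refine Finset.sum_congr rfl fun j _ => ?_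
    have hexp : Real.exp (-(ε*r)) * Real.exp (-(ε*(t-r))) = Real.exp (-(ε*t)) := by
      rw [← Real.exp_add]; congr 1; ring
    rw [mul_pow, ← hexp]
    ring
  have hI : (∫ r in (0:ℝ)..t, (ε^n/(Nat.factorial (n-1))) * (r^(n-1) * Real.exp (-(ε*r)))
        * tailR ε M (t-r)) = ∫ r in (0:ℝ)..t, ∑ j ∈ Finset.range M,
        (ε^n/(Nat.factorial (n-1)) * Real.exp (-(ε*t)) * (ε^j / (Nat.factorial j)))
          * (r^(n-1) * (t-r)^j) :=
    intervalIntegral.integral_congr fun r _ => hrw r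
  rw [hI, intervalIntegral.integral_finset_sum
      (fun j (_ : j ∈ Finset.range M) => (Continuous.intervalIntegrable (by fun_prop) _ _)),
    Finset.mul_sum]
  refine Finset.sum_congr rfl fun j _ => ?_
  rw [intervalIntegral.integral_const_mul, beta_nat t ht j (n-1)]
  have e1 : n - 1 + j + 1 = n + j := by omega
  rw [e1]
  have h1 : (Nat.factorial (n-1) : ℝ) ≠ 0 := Nat.cast_ne_zero.2 (Nat.factorial_ne_zero _)
  have h2 : (Nat.factorial j : ℝ) ≠ 0 := Nat.cast_ne_zero.2 (Nat.factorial_ne_zero _)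
  have h3 : (Nat.factorial (n+j) : ℝ) ≠ 0 := Nat.cast_ne_zero.2 (Nat.factorial_ne_zero _)
  rw [mul_pow]
  field_simp
  rw [pow_add ε n j]
  ring

-- generic radial lintegral
lemma lintegral_fun_norm (n : ℕ) (hn : 1 ≤ n) (F : ℝ → ℝ≥0∞) (hF : Measurable F) :
    ∫⁻ w : EuclideanSpace ℝ (Fin n), F ‖w‖ =
      (volume.toSphere (univ : Set (sphere (0 : EuclideanSpace ℝ (Fin n)) 1))) *
        ∫⁻ r in Ioi (0:ℝ), ENNReal.ofReal (r^(n-1)) * F r := by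
  haveI : Nontrivial (EuclideanSpace ℝ (Fin n)) := by
    apply Module.nontrivial_of_finrank_pos (R := ℝ)
    rw [finrank_euclideanSpace_fin]
    omega
  set E := EuclideanSpace ℝ (Fin n) with hE
  have hdim : Module.finrank ℝ E = n := finrank_euclideanSpace_fin
  have h0 : ∫⁻ w : E, F ‖w‖ = ∫⁻ w in ({0}ᶜ : Set E), F ‖w‖ := by
    rw [restrict_compl_singleton]
  rw [h0, ← lintegral_subtype_comap (measurableSet_singleton (0:E)).compl]
  have hmp := (Measure.measurePreserving_homeomorphUnitSphereProd (volume : Measure E))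
  have hemb : MeasurableEmbedding (homeomorphUnitSphereProd E) :=
    (homeomorphUnitSphereProd E).measurableEmbedding
  have hcomp := hmp.lintegral_comp_emb hemb
    (fun p : sphere (0:E) 1 × Ioi (0:ℝ) => F p.2)
  have heq : (∫⁻ w : ({0}ᶜ : Set E), F ‖(w:E)‖ ∂(volume.comap Subtype.val)) =
      ∫⁻ w : ({0}ᶜ : Set E), F ((homeomorphUnitSphereProd E w).2)
        ∂(volume.comap Subtype.val) :=
    lintegral_congr fun w => by simp [homeomorphUnitSphereProd, homeomorphSphereProd]
  rw [heq, hcomp, lintegral_prod (fun p : sphere (0:E) 1 × Ioi (0:ℝ) => F p.2)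
    ((hF.comp measurable_subtype_coe).comp measurable_snd).aemeasurable]
  have hinner : ∀ s : sphere (0:E) 1,
      (∫⁻ r : Ioi (0:ℝ), F r ∂(Measure.volumeIoiPow (Module.finrank ℝ E - 1))) =
      ∫⁻ r in Ioi (0:ℝ), ENNReal.ofReal (r^(n-1)) * F r := by
    intro s
    rw [Measure.volumeIoiPow, hdim,
      lintegral_withDensity_eq_lintegral_mul (Measure.comap Subtype.val volume)
        (f := fun r : Ioi (0:ℝ) => ENNReal.ofReal (r.1^(n-1)))
        (g := fun r : Ioi (0:ℝ) => F r.1)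
        ((measurable_subtype_coe.pow_const _).ennreal_ofReal)
        (hF.comp measurable_subtype_coe)]
    rw [← lintegral_subtype_comap measurableSet_Ioi
      (fun r : ℝ => ENNReal.ofReal (r^(n-1)) * F r)]
    simp only [Pi.mul_apply]
  calc ∫⁻ s : sphere (0:E) 1, ∫⁻ r : Ioi (0:ℝ), F r
        ∂(Measure.volumeIoiPow (Module.finrank ℝ E - 1)) ∂volume.toSphere
      = ∫⁻ _ : sphere (0:E) 1, (∫⁻ r in Ioi (0:ℝ), ENNReal.ofReal (r^(n-1)) * F r)
          ∂volume.toSphere := by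
        exact lintegral_congr fun s => hinner s
    _ = _ := by rw [lintegral_const, mul_comm]

lemma lap_const_id (n : ℕ) (hn : 1 ≤ n) (ε : ℝ) (hε : 0 < ε) :
    (n:ℝ) * (volume (ball (0:EuclideanSpace ℝ (Fin n)) 1)).toReal * lapConst n ε =
      ε^n / (Nat.factorial (n-1)) := by
  haveI : Nonempty (Fin n) := ⟨⟨0, by omega⟩⟩
  rw [EuclideanSpace.volume_ball]
  simp only [Fintype.card_fin, ENNReal.ofReal_one, one_pow, one_mul]
  rw [ENNReal.toReal_ofReal (by positivity)]
  unfold lapConst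
  have hsq : Real.sqrt Real.pi ^ n = Real.pi ^ ((n:ℝ)/2) := by
    rw [Real.sqrt_eq_rpow, ← Real.rpow_natCast (Real.pi ^ ((1:ℝ)/2)) n,
      ← Real.rpow_mul Real.pi_pos.le]
    congr 1
    ring
  rw [hsq]
  have hΓhalf : 0 < Real.Gamma ((n:ℝ)/2 + 1) := Real.Gamma_pos_of_pos (by positivity)
  have hΓn : Real.Gamma (n:ℝ) = Nat.factorial (n-1) := by
    rw [show ((n:ℝ)) = ((n-1 : ℕ) + 1 : ℕ) from by push_cast [Nat.sub_add_cancel hn]; ring]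
    exact_mod_cast Real.Gamma_nat_eq_factorial (n-1)
  rw [hΓn]
  have h1 : (0:ℝ) < Real.pi ^ ((n:ℝ)/2) := Real.rpow_pos_of_pos Real.pi_pos _
  have h2 : (0:ℝ) < (Nat.factorial (n-1) : ℝ) := by positivity
  have h3 : (0:ℝ) < (n:ℝ) := by positivity
  field_simp

lemma lap_lintegral (n : ℕ) (hn : 1 ≤ n) (ε : ℝ) (hε : 0 < ε)
    (x : EuclideanSpace ℝ (Fin n)) (f : ℝ → ℝ≥0∞) (hf : Measurable f) :
    ∫⁻ v, f ‖v - x‖ ∂(lapMeasure n ε x) =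
      ∫⁻ r in Ioi (0:ℝ),
        ENNReal.ofReal ((ε^n/(Nat.factorial (n-1))) * (r^(n-1) * Real.exp (-(ε*r)))) * f r := by
  have hnorm : Measurable fun v : EuclideanSpace ℝ (Fin n) => ‖v - x‖ :=
    (continuous_id.sub continuous_const).norm.measurable
  have hdens : Measurable fun v : EuclideanSpace ℝ (Fin n) =>
      ENNReal.ofReal (lapConst n ε * Real.exp (-ε * ‖v - x‖)) := by
    apply Measurable.ennreal_ofReal
    exact (measurable_const.mul ((hnorm.const_mul (-ε)).exp))
  rw [lapMeasure, lintegral_withDensity_eq_lintegral_mul volume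
    (g := fun v => f ‖v - x‖) hdens (hf.comp hnorm)]
  have step1 : ∫⁻ v, ((fun v : EuclideanSpace ℝ (Fin n) =>
        ENNReal.ofReal (lapConst n ε * Real.exp (-ε * ‖v - x‖))) * fun v => f ‖v - x‖) v
      = ∫⁻ w : EuclideanSpace ℝ (Fin n),
        ENNReal.ofReal (lapConst n ε * Real.exp (-ε * ‖w‖)) * f ‖w‖ := by
    have := lintegral_add_right_eq_self
      (μ := (volume : Measure (EuclideanSpace ℝ (Fin n))))
      (f := fun w : EuclideanSpace ℝ (Fin n) =>
        ENNReal.ofReal (lapConst n ε * Real.exp (-ε * ‖w‖)) * f ‖w‖) (-x)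
    rw [← this]
    simp only [Pi.mul_apply, ← sub_eq_add_neg]
  rw [step1]
  have hF : Measurable fun r : ℝ =>
      ENNReal.ofReal (lapConst n ε * Real.exp (-ε * r)) * f r :=
    ((measurable_const.mul ((measurable_id.const_mul (-ε)).exp)).ennreal_ofReal).mul hf
  rw [lintegral_fun_norm n hn _ hF]
  haveI : Nontrivial (EuclideanSpace ℝ (Fin n)) := by
    apply Module.nontrivial_of_finrank_pos (R := ℝ)
    rw [finrank_euclideanSpace_fin]; omega
  rw [Measure.toSphere_apply_univ, finrank_euclideanSpace_fin]
  set D : ℝ := (volume (ball (0:EuclideanSpace ℝ (Fin n)) 1)).toReal with hD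
  have hvol : volume (ball (0:EuclideanSpace ℝ (Fin n)) 1) = ENNReal.ofReal D :=
    (ENNReal.ofReal_toReal measure_ball_lt_top.ne).symm
  have hDpos : 0 ≤ D := ENNReal.toReal_nonneg
  rw [hvol, ← lintegral_const_mul ((n : ℝ≥0∞) * ENNReal.ofReal D)
    (f := fun r : ℝ => ENNReal.ofReal (r ^ (n-1)) *
      (ENNReal.ofReal (lapConst n ε * Real.exp (-ε * r)) * f r))
    ((measurable_id.pow_const _).ennreal_ofReal.mul hF)]
  refine setLIntegral_congr_fun measurableSet_Ioi ?_
  intro r hr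
  dsimp only
  have hr0 : (0:ℝ) ≤ r := (le_of_lt hr)
  have hlapc : 0 ≤ lapConst n ε := by
    unfold lapConst
    have h1 : (0:ℝ) < Real.pi ^ ((n:ℝ)/2) := Real.rpow_pos_of_pos Real.pi_pos _
    have h2 : 0 < Real.Gamma ((n:ℝ)/2 + 1) := Real.Gamma_pos_of_pos (by positivity)
    have h3 : 0 < Real.Gamma (n:ℝ) := Real.Gamma_pos_of_pos (by positivity)
    positivity
  rw [← mul_assoc, ← ENNReal.ofReal_natCast n, ← ENNReal.ofReal_mul (by positivity),
    ← mul_assoc, ← ENNReal.ofReal_mul (by positivity),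
    ← ENNReal.ofReal_mul (by positivity)]
  congr 2
  rw [← lap_const_id n hn ε hε, ← hD]
  ring_nf

lemma tailR_zero (ε : ℝ) (n : ℕ) (hn : 1 ≤ n) : tailR ε n 0 = 1 := by
  obtain ⟨m, rfl⟩ : ∃ m, n = m + 1 := ⟨n - 1, (Nat.succ_pred_eq_of_pos hn).symm⟩
  unfold tailR
  rw [Finset.sum_range_succ']
  simp

lemma tailR_nonneg (ε : ℝ) (n : ℕ) (R : ℝ) (hR : 0 ≤ R) (hε : 0 < ε) : 0 ≤ tailR ε n R := by
  unfold tailR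
  apply mul_nonneg (Real.exp_pos _).le
  apply Finset.sum_nonneg
  intro j _
  positivity

lemma lap_tail_measure (n : ℕ) (hn : 1 ≤ n) (ε : ℝ) (hε : 0 < ε)
    (x : EuclideanSpace ℝ (Fin n)) (R : ℝ) (hR : 0 ≤ R) :
    lapMeasure n ε x {v | R < ‖v - x‖} = ENNReal.ofReal (tailR ε n R) := by
  have hS : {v : EuclideanSpace ℝ (Fin n) | R < ‖v - x‖} =
      (fun v : EuclideanSpace ℝ (Fin n) => ‖v - x‖) ⁻¹' (Ioi R) := rfl
  have hnorm : Measurable fun v : EuclideanSpace ℝ (Fin n) => ‖v - x‖ :=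
    (continuous_id.sub continuous_const).norm.measurable
  have hSm : MeasurableSet {v : EuclideanSpace ℝ (Fin n) | R < ‖v - x‖} := by
    rw [hS]; exact hnorm measurableSet_Ioi
  have hind : ∀ v : EuclideanSpace ℝ (Fin n),
      {v : EuclideanSpace ℝ (Fin n) | R < ‖v - x‖}.indicator (fun _ => (1:ℝ≥0∞)) v =
      (Ioi R).indicator (fun _ => (1:ℝ≥0∞)) ‖v - x‖ := by
    intro v
    by_cases h : R < ‖v - x‖ <;> simp [Set.indicator, h]
  rw [← lintegral_indicator_one hSm]
  calc ∫⁻ v, {v : EuclideanSpace ℝ (Fin n) | R < ‖v - x‖}.indicator (fun _ => (1:ℝ≥0∞)) v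
        ∂(lapMeasure n ε x)
      = ∫⁻ v, (Ioi R).indicator (fun _ => (1:ℝ≥0∞)) ‖v - x‖ ∂(lapMeasure n ε x) :=
        lintegral_congr hind
    _ = ∫⁻ r in Ioi (0:ℝ),
          ENNReal.ofReal ((ε^n/(Nat.factorial (n-1))) * (r^(n-1) * Real.exp (-(ε*r)))) *
            (Ioi R).indicator (fun _ => (1:ℝ≥0∞)) r :=
        lap_lintegral n hn ε hε x _ (measurable_one.indicator measurableSet_Ioi)
    _ = ∫⁻ r in Ioi (0:ℝ), (Ioi R).indicator
          (fun r => ENNReal.ofReal ((ε^n/(Nat.factorial (n-1))) * (r^(n-1) * Real.exp (-(ε*r))))) r := by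
        apply lintegral_congr
        intro r
        by_cases h : r ∈ Ioi R <;> simp [Set.indicator, h]
    _ = ∫⁻ r in Ioi R,
          ENNReal.ofReal ((ε^n/(Nat.factorial (n-1))) * (r^(n-1) * Real.exp (-(ε*r)))) := by
        rw [lintegral_indicator measurableSet_Ioi, Measure.restrict_restrict measurableSet_Ioi,
          Set.Ioi_inter_Ioi]
        congr 2
        simp [max_eq_left hR]
    _ = ENNReal.ofReal (tailR ε n R) := by
        rw [← MeasureTheory.ofReal_integral_eq_lintegral_ofReal]
        · rw [integral_const_mul, integral_tail ε hε n hn R hR]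
          congr 1
          have h1 : (Nat.factorial (n-1) : ℝ) ≠ 0 := Nat.cast_ne_zero.2 (Nat.factorial_ne_zero _)
          have h2 : ε^n ≠ 0 := pow_ne_zero _ hε.ne'
          field_simp
        · exact (integrableOn_tail ε hε n hn R hR).const_mul _
        · filter_upwards [ae_restrict_mem measurableSet_Ioi] with r hr
          have : (0:ℝ) ≤ r := hR.trans (le_of_lt hr)
          positivity

lemma lap_prob (n : ℕ) (hn : 1 ≤ n) (ε : ℝ) (hε : 0 < ε) (x : EuclideanSpace ℝ (Fin n)) :
    IsProbabilityMeasure (lapMeasure n ε x) := by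
  haveI : Nontrivial (EuclideanSpace ℝ (Fin n)) := by
    apply Module.nontrivial_of_finrank_pos (R := ℝ)
    rw [finrank_euclideanSpace_fin]; omega
  constructor
  have hx : lapMeasure n ε x {x} = 0 := by
    rw [lapMeasure, withDensity_apply _ (measurableSet_singleton x)]
    rw [Measure.restrict_eq_zero.2 (measure_singleton x)]
    simp
  have hcompl : ({x}ᶜ : Set (EuclideanSpace ℝ (Fin n))) = {v | 0 < ‖v - x‖} := by
    ext v
    simp [norm_pos_iff, sub_ne_zero]
  have := lap_tail_measure n hn ε hε x 0 le_rfl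
  rw [← hcompl, tailR_zero ε n hn] at this
  rw [← measure_add_measure_compl (measurableSet_singleton x), hx, zero_add, this,
    ENNReal.ofReal_one]

lemma gdens_lint (n : ℕ) (hn : 1 ≤ n) (ε : ℝ) (hε : 0 < ε) (R : ℝ) (hR : 0 ≤ R) :
    ∫⁻ r in Ioi R, ENNReal.ofReal ((ε^n/(Nat.factorial (n-1))) * (r^(n-1) * Real.exp (-(ε*r))))
      = ENNReal.ofReal (tailR ε n R) := by
  rw [← MeasureTheory.ofReal_integral_eq_lintegral_ofReal]
  · rw [integral_const_mul, integral_tail ε hε n hn R hR]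
    congr 1
    have h1 : (Nat.factorial (n-1) : ℝ) ≠ 0 := Nat.cast_ne_zero.2 (Nat.factorial_ne_zero _)
    have h2 : ε^n ≠ 0 := pow_ne_zero _ hε.ne'
    field_simp
  · exact (integrableOn_tail ε hε n hn R hR).const_mul _
  · filter_upwards [ae_restrict_mem measurableSet_Ioi] with r hr
    have : (0:ℝ) ≤ r := hR.trans (le_of_lt hr)
    positivity

lemma tailR_continuous (ε : ℝ) (M : ℕ) : Continuous (fun s : ℝ => tailR ε M s) := by
  unfold tailR
  fun_prop

lemma lap_conv (n : ℕ) (hn : 1 ≤ n) (ε : ℝ) (hε : 0 < ε)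
    (x : EuclideanSpace ℝ (Fin n)) (M : ℕ) (t : ℝ) (ht : 0 ≤ t) :
    ∫⁻ v, (if ‖v - x‖ ≤ t then ENNReal.ofReal (tailR ε M (t - ‖v - x‖)) else 1)
        ∂(lapMeasure n ε x) = ENNReal.ofReal (tailR ε (n + M) t) := by
  set f : ℝ → ℝ≥0∞ := fun s => if s ≤ t then ENNReal.ofReal (tailR ε M (t - s)) else 1 with hf
  have hfm : Measurable f := by
    apply Measurable.ite (measurableSet_Iic)
    · exact ((tailR_continuous ε M).comp (continuous_const.sub continuous_id)).measurable.ennreal_ofReal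
    · exact measurable_const
  have := lap_lintegral n hn ε hε x f hfm
  rw [show (∫⁻ v, (if ‖v - x‖ ≤ t then ENNReal.ofReal (tailR ε M (t - ‖v - x‖)) else 1)
      ∂(lapMeasure n ε x)) = ∫⁻ v, f ‖v - x‖ ∂(lapMeasure n ε x) from rfl, this]
  rw [← Set.Ioc_union_Ioi_eq_Ioi ht,
    lintegral_union measurableSet_Ioi ((Set.Ioc_disjoint_Ioi (le_refl t)))]
  have hB : ∫⁻ r in Ioi t,
      ENNReal.ofReal ((ε^n/(Nat.factorial (n-1))) * (r^(n-1) * Real.exp (-(ε*r)))) * f r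
      = ENNReal.ofReal (tailR ε n t) := by
    rw [← gdens_lint n hn ε hε t ht]
    apply setLIntegral_congr_fun measurableSet_Ioi ?_
    intro r hr
    rw [hf]
    simp only [not_le.2 (mem_Ioi.1 hr), if_false, mul_one]
  have hA : ∫⁻ r in Ioc 0 t,
      ENNReal.ofReal ((ε^n/(Nat.factorial (n-1))) * (r^(n-1) * Real.exp (-(ε*r)))) * f r
      = ENNReal.ofReal (Real.exp (-(ε*t)) *
          ∑ j ∈ Finset.range M, (ε*t)^(n+j) / (Nat.factorial (n+j))) := by
    have hcong : ∫⁻ r in Ioc 0 t,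
        ENNReal.ofReal ((ε^n/(Nat.factorial (n-1))) * (r^(n-1) * Real.exp (-(ε*r)))) * f r
        = ∫⁻ r in Ioc 0 t, ENNReal.ofReal
            ((ε^n/(Nat.factorial (n-1))) * (r^(n-1) * Real.exp (-(ε*r))) * tailR ε M (t - r)) := by
      apply setLIntegral_congr_fun measurableSet_Ioc ?_
      intro r hr
      rw [hf]
      simp only [hr.2, if_true]
      rw [← ENNReal.ofReal_mul]
      have h0r : (0:ℝ) ≤ r := le_of_lt hr.1
      positivity
    rw [hcong, ← MeasureTheory.ofReal_integral_eq_lintegral_ofReal]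
    · congr 1
      rw [← intervalIntegral.integral_of_le ht]
      exact conv_scalar ε hε n hn M t ht
    · apply Continuous.integrableOn_Ioc
      have := tailR_continuous ε M
      fun_prop
    · filter_upwards [ae_restrict_mem measurableSet_Ioc] with r hr
      have h0r : (0:ℝ) ≤ r := le_of_lt hr.1
      have htr : 0 ≤ t - r := sub_nonneg.2 hr.2
      have := tailR_nonneg ε M (t - r) htr hε
      positivity
  rw [hA, hB, ← ENNReal.ofReal_add (by
      have : ∀ j ∈ Finset.range M, (0:ℝ) ≤ (ε*t)^(n+j) / ((Nat.factorial (n+j)):ℝ) :=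
        fun j _ => by positivity
      have := Finset.sum_nonneg this
      positivity) (tailR_nonneg ε n t ht hε)]
  congr 1
  unfold tailR
  rw [sum_range_add' (fun j => (ε*t)^j / (Nat.factorial j)) n M]
  ring

lemma pi_tail_bound (n : ℕ) (hn : 1 ≤ n) (ε : ℝ) (hε : 0 < ε) :
    ∀ (m : ℕ) (t : ℝ), 0 ≤ t → ∀ (c : Fin m → EuclideanSpace ℝ (Fin n)),
    Measure.pi (fun i => lapMeasure n ε (c i))
        {v : Fin m → EuclideanSpace ℝ (Fin n) | t < ∑ i, ‖v i - c i‖}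
      ≤ ENNReal.ofReal (tailR ε (n * m) t) := by
  intro m
  induction m with
  | zero =>
    intro t ht c
    have : {v : Fin 0 → EuclideanSpace ℝ (Fin n) | t < ∑ i, ‖v i - c i‖} = ∅ := by
      ext v
      simp [not_lt.2 ht]
    rw [this, measure_empty]
    exact bot_le
  | succ m ih =>
    intro t ht c
    haveI hPr : ∀ i, IsProbabilityMeasure (lapMeasure n ε (c i)) :=
      fun i => lap_prob n hn ε hε (c i)
    haveI hSF : ∀ i, SigmaFinite (lapMeasure n ε (c i)) := fun i => inferInstance
    have hSm : MeasurableSet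
        {v : Fin (m+1) → EuclideanSpace ℝ (Fin n) | t < ∑ i, ‖v i - c i‖} := by
      apply measurableSet_lt measurable_const
      exact Finset.measurable_sum _ fun i _ =>
        ((continuous_apply i).sub continuous_const).norm.measurable
    have hmp := measurePreserving_piFinSuccAbove (fun i => lapMeasure n ε (c i)) 0
    set e := MeasurableEquiv.piFinSuccAbove
      (fun _ : Fin (m+1) => EuclideanSpace ℝ (Fin n)) 0 with he
    have hAm : MeasurableSet (e.symm ⁻¹'
        {v : Fin (m+1) → EuclideanSpace ℝ (Fin n) | t < ∑ i, ‖v i - c i‖}) :=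
      e.symm.measurable hSm
    have hpre : {v : Fin (m+1) → EuclideanSpace ℝ (Fin n) | t < ∑ i, ‖v i - c i‖} =
        e ⁻¹' (e.symm ⁻¹'
          {v : Fin (m+1) → EuclideanSpace ℝ (Fin n) | t < ∑ i, ‖v i - c i‖}) := by
      rw [← Set.preimage_comp]
      simp
    have h1 : Measure.pi (fun i => lapMeasure n ε (c i))
          {v : Fin (m+1) → EuclideanSpace ℝ (Fin n) | t < ∑ i, ‖v i - c i‖} =
        ((lapMeasure n ε (c 0)).prod
            (Measure.pi fun j => lapMeasure n ε (c ((0:Fin (m+1)).succAbove j))))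
          (e.symm ⁻¹' {v : Fin (m+1) → EuclideanSpace ℝ (Fin n) | t < ∑ i, ‖v i - c i‖}) := by
      conv_lhs => rw [hpre]
      exact hmp.measure_preimage hAm.nullMeasurableSet
    rw [h1, Measure.prod_apply hAm]
    have hslice : ∀ y : EuclideanSpace ℝ (Fin n), (Prod.mk y ⁻¹' (e.symm ⁻¹'
          {v : Fin (m+1) → EuclideanSpace ℝ (Fin n) | t < ∑ i, ‖v i - c i‖})) =
        {w : Fin m → EuclideanSpace ℝ (Fin n) |
          t - ‖y - c 0‖ < ∑ j, ‖w j - c ((0:Fin (m+1)).succAbove j)‖} := by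
      intro y
      ext w
      simp only [Set.mem_preimage, Set.mem_setOf_eq]
      have h0 : e.symm (y, w) 0 = y := by
        simp [he, MeasurableEquiv.piFinSuccAbove]
      have hsucc : ∀ j : Fin m, e.symm (y, w) ((0:Fin (m+1)).succAbove j) = w j := by
        intro j
        simp [he, MeasurableEquiv.piFinSuccAbove]
      rw [Fin.sum_univ_succAbove (fun i => ‖e.symm (y, w) i - c i‖) 0]
      simp only [h0, hsucc]
      constructor <;> intro h <;> linarith
    have hbound : ∀ y : EuclideanSpace ℝ (Fin n),
        (Measure.pi fun j => lapMeasure n ε (c ((0:Fin (m+1)).succAbove j)))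
            (Prod.mk y ⁻¹' (e.symm ⁻¹'
              {v : Fin (m+1) → EuclideanSpace ℝ (Fin n) | t < ∑ i, ‖v i - c i‖})) ≤
          (if ‖y - c 0‖ ≤ t then ENNReal.ofReal (tailR ε (n*m) (t - ‖y - c 0‖)) else 1) := by
      intro y
      rw [hslice y]
      by_cases h : ‖y - c 0‖ ≤ t
      · rw [if_pos h]
        exact ih (t - ‖y - c 0‖) (sub_nonneg.2 h) (fun j => c ((0:Fin (m+1)).succAbove j))
      · rw [if_neg h]
        exact prob_le_one
    calc ∫⁻ y, (Measure.pi fun j => lapMeasure n ε (c ((0:Fin (m+1)).succAbove j)))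
            (Prod.mk y ⁻¹' (e.symm ⁻¹'
              {v : Fin (m+1) → EuclideanSpace ℝ (Fin n) | t < ∑ i, ‖v i - c i‖}))
          ∂(lapMeasure n ε (c 0))
        ≤ ∫⁻ y, (if ‖y - c 0‖ ≤ t then ENNReal.ofReal (tailR ε (n*m) (t - ‖y - c 0‖)) else 1)
            ∂(lapMeasure n ε (c 0)) := lintegral_mono hbound
      _ = ENNReal.ofReal (tailR ε (n + n*m) t) := lap_conv n hn ε hε (c 0) (n*m) t ht
      _ = ENNReal.ofReal (tailR ε (n * (m+1)) t) := by
          congr 2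
          ring

lemma fact_aux (n i : ℕ) : ∀ N : ℕ, i.factorial * n.factorial ^ N ≤ (n*N + i).factorial := by
  intro N
  induction N with
  | zero => simp
  | succ N ih =>
    have h1 : i.factorial * n.factorial ^ (N+1) = (i.factorial * n.factorial ^ N) * n.factorial := by
      ring
    rw [h1]
    calc (i.factorial * n.factorial ^ N) * n.factorial
        ≤ (n*N + i).factorial * n.factorial := Nat.mul_le_mul_right _ ih
      _ ≤ ((n*N + i) + n).factorial :=
          Nat.le_of_dvd (Nat.factorial_pos _) (Nat.factorial_mul_factorial_dvd_factorial_add _ _)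
      _ = (n*(N+1) + i).factorial := by congr 1; ring

lemma comb_ineq (x : ℝ) (hx : 0 ≤ x) (n : ℕ) : ∀ N : ℕ,
    ∑ j ∈ Finset.range (n*N), x^j / (Nat.factorial j) ≤
      (∑ i ∈ Finset.range n, x^i / (Nat.factorial i)) *
        (∑ k ∈ Finset.range N, (x^n / (Nat.factorial n))^k) := by
  intro N
  induction N with
  | zero => simp
  | succ N ih =>
    rw [Nat.mul_succ, sum_range_add' (fun j => x^j / (Nat.factorial j)) (n*N) n,
      Finset.sum_range_succ _ N, mul_add]
    refine add_le_add ih ?_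
    rw [Finset.sum_mul]
    refine Finset.sum_le_sum fun i _ => ?_
    rw [div_pow, div_mul_div_comm, ← pow_mul, ← pow_add]
    have hle : ((Nat.factorial i : ℝ) * (Nat.factorial n : ℝ)^N) ≤ (Nat.factorial (n*N + i) : ℝ) := by
      have := fact_aux n i N
      exact_mod_cast this
    have h2 : (0:ℝ) < (Nat.factorial i : ℝ) * (Nat.factorial n : ℝ)^N := by positivity
    calc x^(n*N + i) / (Nat.factorial (n*N + i) : ℝ)
        ≤ x^(n*N + i) / ((Nat.factorial i : ℝ) * (Nat.factorial n : ℝ)^N) :=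
          div_le_div_of_nonneg_left (by positivity) h2 hle
      _ = x^(i + n*N) / ((Nat.factorial i : ℝ) * (Nat.factorial n : ℝ)^N) := by
          rw [add_comm]
      _ = _ := by rw [mul_comm (n) (N)]

/-- utility bound for the Earth Mover's privacy mechanism. For `n, N ≥ 1`,
`ε > 0`, `Δ ≥ 0` and any input bag `b : Fin N → ℝ^n`, the product of the Laplacian
measures centered at the `b i` assigns to the set
`{v | min_τ Σ_i ‖b i − v (τ i)‖ ≤ N·Δ}` (i.e. the bags within Earth Mover's distance `Δ`
of `b`) probability at least
`1 − exp(−εNΔ) · e_{n−1}(εNΔ) · Σ_{k=0}^{N−1} ((εNΔ)^n/n!)^k`. -/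
theorem earth_mover_utility_bound (n N : ℕ) (hn : 1 ≤ n) (hN : 1 ≤ N)
    (ε : ℝ) (hε : 0 < ε) (Δ : ℝ) (hΔ : 0 ≤ Δ)
    (b : Fin N → EuclideanSpace ℝ (Fin n)) :
    ENNReal.ofReal
        (1 - Real.exp (-(ε * N * Δ)) *
            (∑ k ∈ Finset.range n, (ε * N * Δ) ^ k / (Nat.factorial k)) *
              ∑ k ∈ Finset.range N, ((ε * N * Δ) ^ n / (Nat.factorial n)) ^ k) ≤
      Measure.pi (fun i => lapMeasure n ε (b i))
        {v : Fin N → EuclideanSpace ℝ (Fin n) |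
          (⨅ τ : Equiv.Perm (Fin N), ∑ i, ‖b i - v (τ i)‖) ≤ N * Δ} := by
  haveI : ∀ i, IsProbabilityMeasure (lapMeasure n ε (b i)) :=
    fun i => lap_prob n hn ε hε (b i)
  set T : ℝ := (N:ℝ) * Δ with hT
  have hT0 : 0 ≤ T := by positivity
  have hxT : ε * (N:ℝ) * Δ = ε * T := by rw [hT]; ring
  rw [hxT]
  have hx0 : 0 ≤ ε * T := by positivity
  set P := Measure.pi (fun i => lapMeasure n ε (b i)) with hP
  haveI : IsProbabilityMeasure P := by
    rw [hP]; infer_instance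
  have key := pi_tail_bound n hn ε hε N T hT0 b
  -- subset relation
  have hsub : {v : Fin N → EuclideanSpace ℝ (Fin n) | ∑ i, ‖b i - v i‖ ≤ T} ⊆
      {v : Fin N → EuclideanSpace ℝ (Fin n) |
        (⨅ τ : Equiv.Perm (Fin N), ∑ i, ‖b i - v (τ i)‖) ≤ T} := by
    intro v hv
    have hbdd : BddBelow (Set.range fun τ : Equiv.Perm (Fin N) => ∑ i, ‖b i - v (τ i)‖) := by
      refine ⟨0, ?_⟩
      rintro y ⟨τ, rfl⟩
      exact Finset.sum_nonneg fun i _ => norm_nonneg _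
    calc (⨅ τ : Equiv.Perm (Fin N), ∑ i, ‖b i - v (τ i)‖)
        ≤ ∑ i, ‖b i - v ((Equiv.refl (Fin N)) i)‖ := ciInf_le hbdd (Equiv.refl (Fin N))
      _ = ∑ i, ‖b i - v i‖ := rfl
      _ ≤ T := hv
  have hcover : {v : Fin N → EuclideanSpace ℝ (Fin n) | ∑ i, ‖b i - v i‖ ≤ T} ∪
      {v : Fin N → EuclideanSpace ℝ (Fin n) | T < ∑ i, ‖v i - b i‖} = Set.univ := by
    ext v
    simp only [Set.mem_union, Set.mem_setOf_eq, Set.mem_univ, iff_true]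
    by_cases h : ∑ i, ‖b i - v i‖ ≤ T
    · exact Or.inl h
    · right
      have : ∑ i, ‖v i - b i‖ = ∑ i, ‖b i - v i‖ :=
        Finset.sum_congr rfl fun i _ => norm_sub_rev _ _
      rw [this]
      exact not_le.1 h
  have h1le : 1 ≤ P {v : Fin N → EuclideanSpace ℝ (Fin n) | ∑ i, ‖b i - v i‖ ≤ T} +
      P {v : Fin N → EuclideanSpace ℝ (Fin n) | T < ∑ i, ‖v i - b i‖} := by
    have := measure_union_le (μ := P)
      {v : Fin N → EuclideanSpace ℝ (Fin n) | ∑ i, ‖b i - v i‖ ≤ T}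
      {v : Fin N → EuclideanSpace ℝ (Fin n) | T < ∑ i, ‖v i - b i‖}
    rw [hcover, measure_univ] at this
    exact this
  -- real-number comparison
  have hcomb : tailR ε (n*N) T ≤ Real.exp (-(ε * T)) *
      (∑ k ∈ Finset.range n, (ε * T) ^ k / (Nat.factorial k)) *
        ∑ k ∈ Finset.range N, ((ε * T) ^ n / (Nat.factorial n)) ^ k := by
    unfold tailR
    rw [mul_assoc]
    exact mul_le_mul_of_nonneg_left (comb_ineq (ε*T) hx0 n N) (Real.exp_pos _).le
  calc ENNReal.ofReal (1 - Real.exp (-(ε * T)) *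
            (∑ k ∈ Finset.range n, (ε * T) ^ k / (Nat.factorial k)) *
              ∑ k ∈ Finset.range N, ((ε * T) ^ n / (Nat.factorial n)) ^ k)
      ≤ ENNReal.ofReal (1 - tailR ε (n*N) T) :=
        ENNReal.ofReal_le_ofReal (by linarith)
    _ = 1 - ENNReal.ofReal (tailR ε (n*N) T) := by
        rw [ENNReal.ofReal_sub _ (tailR_nonneg ε (n*N) T hT0 hε), ENNReal.ofReal_one]
    _ ≤ 1 - P {v : Fin N → EuclideanSpace ℝ (Fin n) | T < ∑ i, ‖v i - b i‖} :=
        tsub_le_tsub_left key 1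
    _ ≤ P {v : Fin N → EuclideanSpace ℝ (Fin n) | ∑ i, ‖b i - v i‖ ≤ T} :=
        tsub_le_iff_right.2 h1le
    _ ≤ _ := measure_mono hsub
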